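/- If s ∈ ℝ is algebraic over ℚ of degree at least 9 (its minimal polynomial over ℚ has degree ≥ 9), then 8s⁸ ∉ Λ(s). Consequently, if A ⊆ ℝ² has distance set Δ(A) ⊆ {n + s : n ∈ ℕ}, then A has at most 3 elements. -/

import Mathlib

/-- The set `Λ(s) = ℤ + 4sℤ + 2s²ℤ + 4s³ℤ + s⁴ℤ + 2s⁵ℤ + 2s⁶ℤ + 4s⁷ℤ`. -/
def Lambda (s : ℝ) : Set ℝ :=
  {x | ∃ n₀ n₁ n₂ n₃ n₄ n₅ n₆ n₇ : ℤ,
    x = (n₀ : ℝ) + 4 * n₁ * s + 2 * n₂ * s ^ 2 + 4 * n₃ * s ^ 3 + n₄ * s ^ 4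
      + 2 * n₅ * s ^ 5 + 2 * n₆ * s ^ 6 + 4 * n₇ * s ^ 7}


open Polynomial

lemma annihilator_bound (s : ℝ) (halg : IsAlgebraic ℚ s)
    (hdeg : 9 ≤ (minpoly ℚ s).natDegree)
    (p : ℚ[X]) (hp : p ≠ 0) (hdp : p.natDegree ≤ 8)
    (hev : Polynomial.aeval s p = 0) : False := by
  have h1 := minpoly.degree_le_of_ne_zero ℚ s hp hev
  have h2 := Polynomial.natDegree_le_natDegree h1
  omega

lemma no_rel8 (s : ℝ) (halg : IsAlgebraic ℚ s)
    (hdeg : 9 ≤ (minpoly ℚ s).natDegree)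
    (c0 c1 c2 c3 c4 c5 c6 c7 : ℚ)
    (h : (c0:ℝ) + c1*s + c2*s^2 + c3*s^3 + c4*s^4 + c5*s^5 + c6*s^6 + c7*s^7
        + 8*s^8 = 0) : False := by
  refine annihilator_bound s halg hdeg
    (C c0 + C c1 * X + C c2 * X^2 + C c3 * X^3 + C c4 * X^4 + C c5 * X^5
      + C c6 * X^6 + C c7 * X^7 + C 8 * X^8) ?_ ?_ ?_
  · intro hz
    have := congrArg (fun q => Polynomial.coeff q 8) hz
    simp [Polynomial.coeff_add, Polynomial.coeff_C_mul, Polynomial.coeff_X_pow,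
      Polynomial.coeff_C] at this
  · compute_degree
  · push_cast
    simpa [map_add, map_mul, map_pow] using h

lemma no_rel6 (s : ℝ) (halg : IsAlgebraic ℚ s)
    (hdeg : 9 ≤ (minpoly ℚ s).natDegree)
    (c0 c1 c2 c3 c4 c5 : ℚ)
    (h : (c0:ℝ) + c1*s + c2*s^2 + c3*s^3 + c4*s^4 + c5*s^5 + 4*s^6 = 0) :
    False := by
  refine annihilator_bound s halg hdeg
    (C c0 + C c1 * X + C c2 * X^2 + C c3 * X^3 + C c4 * X^4 + C c5 * X^5
      + C 4 * X^6) ?_ (by compute_degree <;> norm_num) ?_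
  · intro hz
    have := congrArg (fun q => Polynomial.coeff q 6) hz
    simp [Polynomial.coeff_add, Polynomial.coeff_C_mul, Polynomial.coeff_X_pow,
      Polynomial.coeff_C] at this
  · push_cast
    simpa [map_add, map_mul, map_pow] using h


/-- `8` times the Gram determinant of the three difference vectors,
expressed in terms of the six squared distances. -/
def detE (x01 x02 x03 x12 x13 x23 : ℝ) : ℝ :=
  2*x01 * (2*x02 * (2*x03) - (x02+x03-x23)^2)
  - (x01+x02-x12) * ((x01+x02-x12) * (2*x03) - (x02+x03-x23) * (x01+x03-x13))
  + (x01+x03-x13) * ((x01+x02-x12) * (x02+x03-x23) - 2*x02 * (x01+x03-x13))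

lemma detE_vanish (u0 u1 u2 u3 v0 v1 v2 v3 : ℝ) :
    detE ((u0-u1)^2+(v0-v1)^2) ((u0-u2)^2+(v0-v2)^2) ((u0-u3)^2+(v0-v3)^2)
      ((u1-u2)^2+(v1-v2)^2) ((u1-u3)^2+(v1-v3)^2) ((u2-u3)^2+(v2-v3)^2) = 0 := by
  simp only [detE]; ring

lemma sq_dist (p q : EuclideanSpace ℝ (Fin 2)) (n : ℕ) (h : dist p q = (n:ℝ) + s) :
    ((n:ℝ) + s)^2 = (p 0 - q 0)^2 + (p 1 - q 1)^2 := by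
  rw [← h, EuclideanSpace.dist_eq]
  rw [Real.sq_sqrt (by positivity)]
  rw [Fin.sum_univ_two]
  simp [Real.dist_eq, sq_abs]

set_option maxHeartbeats 2000000 in
set_option maxRecDepth 20000 in
lemma four_point (s : ℝ) (halg : IsAlgebraic ℚ s)
    (hdeg : 9 ≤ (minpoly ℚ s).natDegree)
    (p0 p1 p2 p3 : EuclideanSpace ℝ (Fin 2)) (n01 n02 n03 n12 n13 n23 : ℕ)
    (h01 : dist p0 p1 = (n01:ℝ) + s) (h02 : dist p0 p2 = (n02:ℝ) + s)
    (h03 : dist p0 p3 = (n03:ℝ) + s) (h12 : dist p1 p2 = (n12:ℝ) + s)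
    (h13 : dist p1 p3 = (n13:ℝ) + s) (h23 : dist p2 p3 = (n23:ℝ) + s) : False := by
  have e01 := sq_dist p0 p1 n01 h01
  have e02 := sq_dist p0 p2 n02 h02
  have e03 := sq_dist p0 p3 n03 h03
  have e12 := sq_dist p1 p2 n12 h12
  have e13 := sq_dist p1 p3 n13 h13
  have e23 := sq_dist p2 p3 n23 h23
  have h0 := detE_vanish (p0 0) (p1 0) (p2 0) (p3 0) (p0 1) (p1 1) (p2 1) (p3 1)
  rw [← e01, ← e02, ← e03, ← e12, ← e13, ← e23] at h0
  simp only [detE] at h0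
  refine no_rel6 s halg hdeg
    ((-2)*(n12:ℚ)^2*(n13:ℚ)^2*(n23:ℚ)^2 + 2*(n03:ℚ)^2*(n12:ℚ)^2*(n23:ℚ)^2 +
      2*(n03:ℚ)^2*(n12:ℚ)^2*(n13:ℚ)^2 + (-2)*(n03:ℚ)^2*(n12:ℚ)^4 + (-2)*(n03:ℚ)^4*(n12:ℚ)^2 +
      2*(n02:ℚ)^2*(n13:ℚ)^2*(n23:ℚ)^2 + (-2)*(n02:ℚ)^2*(n13:ℚ)^4 +
      2*(n02:ℚ)^2*(n12:ℚ)^2*(n13:ℚ)^2 + (-2)*(n02:ℚ)^2*(n03:ℚ)^2*(n23:ℚ)^2 +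
      2*(n02:ℚ)^2*(n03:ℚ)^2*(n13:ℚ)^2 + 2*(n02:ℚ)^2*(n03:ℚ)^2*(n12:ℚ)^2 +
      (-2)*(n02:ℚ)^4*(n13:ℚ)^2 + (-2)*(n01:ℚ)^2*(n23:ℚ)^4 + 2*(n01:ℚ)^2*(n13:ℚ)^2*(n23:ℚ)^2 +
      2*(n01:ℚ)^2*(n12:ℚ)^2*(n23:ℚ)^2 + 2*(n01:ℚ)^2*(n03:ℚ)^2*(n23:ℚ)^2 +
      (-2)*(n01:ℚ)^2*(n03:ℚ)^2*(n13:ℚ)^2 + 2*(n01:ℚ)^2*(n03:ℚ)^2*(n12:ℚ)^2 +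
      2*(n01:ℚ)^2*(n02:ℚ)^2*(n23:ℚ)^2 + 2*(n01:ℚ)^2*(n02:ℚ)^2*(n13:ℚ)^2 +
      (-2)*(n01:ℚ)^2*(n02:ℚ)^2*(n12:ℚ)^2 + (-2)*(n01:ℚ)^4*(n23:ℚ)^2)
    ((-4)*(n12:ℚ)*(n13:ℚ)^2*(n23:ℚ)^2 + (-4)*(n12:ℚ)^2*(n13:ℚ)*(n23:ℚ)^2 +
      (-4)*(n12:ℚ)^2*(n13:ℚ)^2*(n23:ℚ) + 4*(n03:ℚ)*(n12:ℚ)^2*(n23:ℚ)^2 +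
      4*(n03:ℚ)*(n12:ℚ)^2*(n13:ℚ)^2 + (-4)*(n03:ℚ)*(n12:ℚ)^4 + 4*(n03:ℚ)^2*(n12:ℚ)*(n23:ℚ)^2 +
      4*(n03:ℚ)^2*(n12:ℚ)*(n13:ℚ)^2 + 4*(n03:ℚ)^2*(n12:ℚ)^2*(n23:ℚ) +
      4*(n03:ℚ)^2*(n12:ℚ)^2*(n13:ℚ) + (-8)*(n03:ℚ)^2*(n12:ℚ)^3 + (-8)*(n03:ℚ)^3*(n12:ℚ)^2 +
      (-4)*(n03:ℚ)^4*(n12:ℚ) + 4*(n02:ℚ)*(n13:ℚ)^2*(n23:ℚ)^2 + (-4)*(n02:ℚ)*(n13:ℚ)^4 +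
      4*(n02:ℚ)*(n12:ℚ)^2*(n13:ℚ)^2 + (-4)*(n02:ℚ)*(n03:ℚ)^2*(n23:ℚ)^2 +
      4*(n02:ℚ)*(n03:ℚ)^2*(n13:ℚ)^2 + 4*(n02:ℚ)*(n03:ℚ)^2*(n12:ℚ)^2 +
      4*(n02:ℚ)^2*(n13:ℚ)*(n23:ℚ)^2 + 4*(n02:ℚ)^2*(n13:ℚ)^2*(n23:ℚ) + (-8)*(n02:ℚ)^2*(n13:ℚ)^3
      + 4*(n02:ℚ)^2*(n12:ℚ)*(n13:ℚ)^2 + 4*(n02:ℚ)^2*(n12:ℚ)^2*(n13:ℚ) +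
      (-4)*(n02:ℚ)^2*(n03:ℚ)*(n23:ℚ)^2 + 4*(n02:ℚ)^2*(n03:ℚ)*(n13:ℚ)^2 +
      4*(n02:ℚ)^2*(n03:ℚ)*(n12:ℚ)^2 + (-4)*(n02:ℚ)^2*(n03:ℚ)^2*(n23:ℚ) +
      4*(n02:ℚ)^2*(n03:ℚ)^2*(n13:ℚ) + 4*(n02:ℚ)^2*(n03:ℚ)^2*(n12:ℚ) + (-8)*(n02:ℚ)^3*(n13:ℚ)^2
      + (-4)*(n02:ℚ)^4*(n13:ℚ) + (-4)*(n01:ℚ)*(n23:ℚ)^4 + 4*(n01:ℚ)*(n13:ℚ)^2*(n23:ℚ)^2 +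
      4*(n01:ℚ)*(n12:ℚ)^2*(n23:ℚ)^2 + 4*(n01:ℚ)*(n03:ℚ)^2*(n23:ℚ)^2 +
      (-4)*(n01:ℚ)*(n03:ℚ)^2*(n13:ℚ)^2 + 4*(n01:ℚ)*(n03:ℚ)^2*(n12:ℚ)^2 +
      4*(n01:ℚ)*(n02:ℚ)^2*(n23:ℚ)^2 + 4*(n01:ℚ)*(n02:ℚ)^2*(n13:ℚ)^2 +
      (-4)*(n01:ℚ)*(n02:ℚ)^2*(n12:ℚ)^2 + (-8)*(n01:ℚ)^2*(n23:ℚ)^3 +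
      4*(n01:ℚ)^2*(n13:ℚ)*(n23:ℚ)^2 + 4*(n01:ℚ)^2*(n13:ℚ)^2*(n23:ℚ) +
      4*(n01:ℚ)^2*(n12:ℚ)*(n23:ℚ)^2 + 4*(n01:ℚ)^2*(n12:ℚ)^2*(n23:ℚ) +
      4*(n01:ℚ)^2*(n03:ℚ)*(n23:ℚ)^2 + (-4)*(n01:ℚ)^2*(n03:ℚ)*(n13:ℚ)^2 +
      4*(n01:ℚ)^2*(n03:ℚ)*(n12:ℚ)^2 + 4*(n01:ℚ)^2*(n03:ℚ)^2*(n23:ℚ) +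
      (-4)*(n01:ℚ)^2*(n03:ℚ)^2*(n13:ℚ) + 4*(n01:ℚ)^2*(n03:ℚ)^2*(n12:ℚ) +
      4*(n01:ℚ)^2*(n02:ℚ)*(n23:ℚ)^2 + 4*(n01:ℚ)^2*(n02:ℚ)*(n13:ℚ)^2 +
      (-4)*(n01:ℚ)^2*(n02:ℚ)*(n12:ℚ)^2 + 4*(n01:ℚ)^2*(n02:ℚ)^2*(n23:ℚ) +
      4*(n01:ℚ)^2*(n02:ℚ)^2*(n13:ℚ) + (-4)*(n01:ℚ)^2*(n02:ℚ)^2*(n12:ℚ) +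
      (-8)*(n01:ℚ)^3*(n23:ℚ)^2 + (-4)*(n01:ℚ)^4*(n23:ℚ))
    ((-2)*(n23:ℚ)^4 + 2*(n13:ℚ)^2*(n23:ℚ)^2 + (-2)*(n13:ℚ)^4 + (-8)*(n12:ℚ)*(n13:ℚ)*(n23:ℚ)^2
      + (-8)*(n12:ℚ)*(n13:ℚ)^2*(n23:ℚ) + 2*(n12:ℚ)^2*(n23:ℚ)^2 +
      (-8)*(n12:ℚ)^2*(n13:ℚ)*(n23:ℚ) + 2*(n12:ℚ)^2*(n13:ℚ)^2 + (-2)*(n12:ℚ)^4 +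
      8*(n03:ℚ)*(n12:ℚ)*(n23:ℚ)^2 + 8*(n03:ℚ)*(n12:ℚ)*(n13:ℚ)^2 + 8*(n03:ℚ)*(n12:ℚ)^2*(n23:ℚ)
      + 8*(n03:ℚ)*(n12:ℚ)^2*(n13:ℚ) + (-16)*(n03:ℚ)*(n12:ℚ)^3 + 2*(n03:ℚ)^2*(n23:ℚ)^2 +
      2*(n03:ℚ)^2*(n13:ℚ)^2 + 8*(n03:ℚ)^2*(n12:ℚ)*(n23:ℚ) + 8*(n03:ℚ)^2*(n12:ℚ)*(n13:ℚ) +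
      (-16)*(n03:ℚ)^2*(n12:ℚ)^2 + (-16)*(n03:ℚ)^3*(n12:ℚ) + (-2)*(n03:ℚ)^4 +
      8*(n02:ℚ)*(n13:ℚ)*(n23:ℚ)^2 + 8*(n02:ℚ)*(n13:ℚ)^2*(n23:ℚ) + (-16)*(n02:ℚ)*(n13:ℚ)^3 +
      8*(n02:ℚ)*(n12:ℚ)*(n13:ℚ)^2 + 8*(n02:ℚ)*(n12:ℚ)^2*(n13:ℚ) +
      (-8)*(n02:ℚ)*(n03:ℚ)*(n23:ℚ)^2 + 8*(n02:ℚ)*(n03:ℚ)*(n13:ℚ)^2 +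
      8*(n02:ℚ)*(n03:ℚ)*(n12:ℚ)^2 + (-8)*(n02:ℚ)*(n03:ℚ)^2*(n23:ℚ) +
      8*(n02:ℚ)*(n03:ℚ)^2*(n13:ℚ) + 8*(n02:ℚ)*(n03:ℚ)^2*(n12:ℚ) + 2*(n02:ℚ)^2*(n23:ℚ)^2 +
      8*(n02:ℚ)^2*(n13:ℚ)*(n23:ℚ) + (-16)*(n02:ℚ)^2*(n13:ℚ)^2 + 8*(n02:ℚ)^2*(n12:ℚ)*(n13:ℚ) +
      2*(n02:ℚ)^2*(n12:ℚ)^2 + (-8)*(n02:ℚ)^2*(n03:ℚ)*(n23:ℚ) + 8*(n02:ℚ)^2*(n03:ℚ)*(n13:ℚ) +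
      8*(n02:ℚ)^2*(n03:ℚ)*(n12:ℚ) + 2*(n02:ℚ)^2*(n03:ℚ)^2 + (-16)*(n02:ℚ)^3*(n13:ℚ) +
      (-2)*(n02:ℚ)^4 + (-16)*(n01:ℚ)*(n23:ℚ)^3 + 8*(n01:ℚ)*(n13:ℚ)*(n23:ℚ)^2 +
      8*(n01:ℚ)*(n13:ℚ)^2*(n23:ℚ) + 8*(n01:ℚ)*(n12:ℚ)*(n23:ℚ)^2 + 8*(n01:ℚ)*(n12:ℚ)^2*(n23:ℚ)
      + 8*(n01:ℚ)*(n03:ℚ)*(n23:ℚ)^2 + (-8)*(n01:ℚ)*(n03:ℚ)*(n13:ℚ)^2 +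
      8*(n01:ℚ)*(n03:ℚ)*(n12:ℚ)^2 + 8*(n01:ℚ)*(n03:ℚ)^2*(n23:ℚ) +
      (-8)*(n01:ℚ)*(n03:ℚ)^2*(n13:ℚ) + 8*(n01:ℚ)*(n03:ℚ)^2*(n12:ℚ) +
      8*(n01:ℚ)*(n02:ℚ)*(n23:ℚ)^2 + 8*(n01:ℚ)*(n02:ℚ)*(n13:ℚ)^2 +
      (-8)*(n01:ℚ)*(n02:ℚ)*(n12:ℚ)^2 + 8*(n01:ℚ)*(n02:ℚ)^2*(n23:ℚ) +
      8*(n01:ℚ)*(n02:ℚ)^2*(n13:ℚ) + (-8)*(n01:ℚ)*(n02:ℚ)^2*(n12:ℚ) + (-16)*(n01:ℚ)^2*(n23:ℚ)^2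
      + 8*(n01:ℚ)^2*(n13:ℚ)*(n23:ℚ) + 2*(n01:ℚ)^2*(n13:ℚ)^2 + 8*(n01:ℚ)^2*(n12:ℚ)*(n23:ℚ) +
      2*(n01:ℚ)^2*(n12:ℚ)^2 + 8*(n01:ℚ)^2*(n03:ℚ)*(n23:ℚ) + (-8)*(n01:ℚ)^2*(n03:ℚ)*(n13:ℚ) +
      8*(n01:ℚ)^2*(n03:ℚ)*(n12:ℚ) + 2*(n01:ℚ)^2*(n03:ℚ)^2 + 8*(n01:ℚ)^2*(n02:ℚ)*(n23:ℚ) +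
      8*(n01:ℚ)^2*(n02:ℚ)*(n13:ℚ) + (-8)*(n01:ℚ)^2*(n02:ℚ)*(n12:ℚ) + 2*(n01:ℚ)^2*(n02:ℚ)^2 +
      (-16)*(n01:ℚ)^3*(n23:ℚ) + (-2)*(n01:ℚ)^4)
    ((-8)*(n23:ℚ)^3 + 4*(n13:ℚ)*(n23:ℚ)^2 + 4*(n13:ℚ)^2*(n23:ℚ) + (-8)*(n13:ℚ)^3 +
      4*(n12:ℚ)*(n23:ℚ)^2 + (-16)*(n12:ℚ)*(n13:ℚ)*(n23:ℚ) + 4*(n12:ℚ)*(n13:ℚ)^2 +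
      4*(n12:ℚ)^2*(n23:ℚ) + 4*(n12:ℚ)^2*(n13:ℚ) + (-8)*(n12:ℚ)^3 + 4*(n03:ℚ)*(n23:ℚ)^2 +
      4*(n03:ℚ)*(n13:ℚ)^2 + 16*(n03:ℚ)*(n12:ℚ)*(n23:ℚ) + 16*(n03:ℚ)*(n12:ℚ)*(n13:ℚ) +
      (-16)*(n03:ℚ)*(n12:ℚ)^2 + 4*(n03:ℚ)^2*(n23:ℚ) + 4*(n03:ℚ)^2*(n13:ℚ) +
      (-16)*(n03:ℚ)^2*(n12:ℚ) + (-8)*(n03:ℚ)^3 + 4*(n02:ℚ)*(n23:ℚ)^2 +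
      16*(n02:ℚ)*(n13:ℚ)*(n23:ℚ) + (-16)*(n02:ℚ)*(n13:ℚ)^2 + 16*(n02:ℚ)*(n12:ℚ)*(n13:ℚ) +
      4*(n02:ℚ)*(n12:ℚ)^2 + (-16)*(n02:ℚ)*(n03:ℚ)*(n23:ℚ) + 16*(n02:ℚ)*(n03:ℚ)*(n13:ℚ) +
      16*(n02:ℚ)*(n03:ℚ)*(n12:ℚ) + 4*(n02:ℚ)*(n03:ℚ)^2 + 4*(n02:ℚ)^2*(n23:ℚ) +
      (-16)*(n02:ℚ)^2*(n13:ℚ) + 4*(n02:ℚ)^2*(n12:ℚ) + 4*(n02:ℚ)^2*(n03:ℚ) + (-8)*(n02:ℚ)^3 +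
      (-16)*(n01:ℚ)*(n23:ℚ)^2 + 16*(n01:ℚ)*(n13:ℚ)*(n23:ℚ) + 4*(n01:ℚ)*(n13:ℚ)^2 +
      16*(n01:ℚ)*(n12:ℚ)*(n23:ℚ) + 4*(n01:ℚ)*(n12:ℚ)^2 + 16*(n01:ℚ)*(n03:ℚ)*(n23:ℚ) +
      (-16)*(n01:ℚ)*(n03:ℚ)*(n13:ℚ) + 16*(n01:ℚ)*(n03:ℚ)*(n12:ℚ) + 4*(n01:ℚ)*(n03:ℚ)^2 +
      16*(n01:ℚ)*(n02:ℚ)*(n23:ℚ) + 16*(n01:ℚ)*(n02:ℚ)*(n13:ℚ) + (-16)*(n01:ℚ)*(n02:ℚ)*(n12:ℚ)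
      + 4*(n01:ℚ)*(n02:ℚ)^2 + (-16)*(n01:ℚ)^2*(n23:ℚ) + 4*(n01:ℚ)^2*(n13:ℚ) +
      4*(n01:ℚ)^2*(n12:ℚ) + 4*(n01:ℚ)^2*(n03:ℚ) + 4*(n01:ℚ)^2*(n02:ℚ) + (-8)*(n01:ℚ)^3)
    ((-6)*(n23:ℚ)^2 + 8*(n13:ℚ)*(n23:ℚ) + (-6)*(n13:ℚ)^2 + 8*(n12:ℚ)*(n23:ℚ) +
      8*(n12:ℚ)*(n13:ℚ) + (-6)*(n12:ℚ)^2 + 8*(n03:ℚ)*(n23:ℚ) + 8*(n03:ℚ)*(n13:ℚ) +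
      (-6)*(n03:ℚ)^2 + 8*(n02:ℚ)*(n23:ℚ) + 8*(n02:ℚ)*(n12:ℚ) + 8*(n02:ℚ)*(n03:ℚ) +
      (-6)*(n02:ℚ)^2 + 8*(n01:ℚ)*(n13:ℚ) + 8*(n01:ℚ)*(n12:ℚ) + 8*(n01:ℚ)*(n03:ℚ) +
      8*(n01:ℚ)*(n02:ℚ) + (-6)*(n01:ℚ)^2)
    (4*(n23:ℚ) + 4*(n13:ℚ) + 4*(n12:ℚ) + 4*(n03:ℚ) + 4*(n02:ℚ) + 4*(n01:ℚ))
    ?_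
  push_cast
  linear_combination h0



/-- If `s` is algebraic over `ℚ` of degree at least 9, then `8s⁸ ∉ Λ(s)`;
consequently any planar set whose distance set lies in `ℕ + s` has at most
3 elements. -/
theorem algebraic_degree_ge_nine_not_mem_Lambda (s : ℝ) (halg : IsAlgebraic ℚ s)
    (hdeg : 9 ≤ (minpoly ℚ s).natDegree) :
    8 * s ^ 8 ∉ Lambda s ∧
      ∀ A : Set (EuclideanSpace ℝ (Fin 2)),
        (∀ a ∈ A, ∀ a' ∈ A, a ≠ a' → ∃ n : ℕ, dist a a' = (n : ℝ) + s) →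
        A.Finite ∧ A.ncard ≤ 3 := by
  constructor
  · rintro ⟨n₀, n₁, n₂, n₃, n₄, n₅, n₆, n₇, h⟩
    refine no_rel8 s halg hdeg (-n₀) (-4*n₁) (-2*n₂) (-4*n₃) (-n₄) (-2*n₅)
      (-2*n₆) (-4*n₇) ?_
    push_cast
    linarith
  · intro A hA
    have key : ∀ q0 ∈ A, ∀ q1 ∈ A, ∀ q2 ∈ A, ∀ q3 ∈ A,
        q0 ≠ q1 → q0 ≠ q2 → q0 ≠ q3 → q1 ≠ q2 → q1 ≠ q3 → q2 ≠ q3 → False := by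
      intro q0 h0 q1 h1 q2 h2 q3 h3 d01 d02 d03 d12 d13 d23
      obtain ⟨n01, e01⟩ := hA q0 h0 q1 h1 d01
      obtain ⟨n02, e02⟩ := hA q0 h0 q2 h2 d02
      obtain ⟨n03, e03⟩ := hA q0 h0 q3 h3 d03
      obtain ⟨n12, e12⟩ := hA q1 h1 q2 h2 d12
      obtain ⟨n13, e13⟩ := hA q1 h1 q3 h3 d13
      obtain ⟨n23, e23⟩ := hA q2 h2 q3 h3 d23
      exact four_point s halg hdeg q0 q1 q2 q3 n01 n02 n03 n12 n13 n23
        e01 e02 e03 e12 e13 e23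
    have hfin : A.Finite := by
      by_contra hinf
      have hinf' : A.Infinite := hinf
      set f := hinf'.natEmbedding with hf
      have hne : ∀ i j : ℕ, i ≠ j → (f i : EuclideanSpace ℝ (Fin 2)) ≠ f j :=
        fun i j hij h => hij (f.injective (Subtype.coe_injective h))
      exact key (f 0) (f 0).2 (f 1) (f 1).2 (f 2) (f 2).2 (f 3) (f 3).2
        (hne 0 1 (by norm_num)) (hne 0 2 (by norm_num)) (hne 0 3 (by norm_num))
        (hne 1 2 (by norm_num)) (hne 1 3 (by norm_num)) (hne 2 3 (by norm_num))
    refine ⟨hfin, ?_⟩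
    by_contra hcard
    push_neg at hcard
    have h4 : (4 : ℕ∞) ≤ A.encard := by
      have : A.encard = (A.ncard : ℕ∞) := by
        rw [Set.ncard_def, ENat.coe_toNat hfin.encard_lt_top.ne]
      rw [this]
      exact_mod_cast Nat.cast_le.mpr hcard
    obtain ⟨t, htA, htc⟩ := Set.exists_subset_encard_eq h4
    obtain ⟨a, ha⟩ := Set.encard_ne_zero.mp (by rw [htc]; norm_num) 
    have h3 : (t \ {a}).encard = 3 := by
      have := Set.encard_diff_singleton_of_mem ha
      rw [htc] at this
      rw [this]
      rfl
    obtain ⟨x, y, z, hxy, hxz, hyz, hset⟩ := Set.encard_eq_three.mp h3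
    have hx : x ∈ t \ {a} := by rw [hset]; simp
    have hy : y ∈ t \ {a} := by rw [hset]; simp
    have hz : z ∈ t \ {a} := by rw [hset]; simp
    exact key a (htA ha) x (htA hx.1) y (htA hy.1) z (htA hz.1)
      (fun h => hx.2 (h ▸ rfl)) (fun h => hy.2 (h ▸ rfl)) (fun h => hz.2 (h ▸ rfl))
      hxy hxz hyz
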